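/- Let n be a natural number, q = 3^(2n+1), m = 3^(n+1), and let F be a finite field with q elements. Then the action of Fˣ on F \ {0} given by k · β = k^(m+1)·β has exactly two orbits, namely the orbit of 1 and the orbit of −1; these orbits are the set of nonzero squares and the set of nonsquares of F, each of size (q−1)/2. (This is Lemma 2.16(2): K has exactly two orbits on Q₂ \ {1} acting by conjugation.) -/
import Mathlib

lemma pow3_mod4 (n : ℕ) : 3 ^ (2 * n + 1) % 4 = 3 := by
  induction n with
  | zero => norm_num
  | succ k ih =>
    rw [show 2 * (k + 1) + 1 = (2 * k + 1) + 2 from by omega, pow_add, Nat.mul_mod, ih]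
    norm_num

lemma isSquare_neg_iff {F : Type*} [Field F] [Fintype F] [DecidableEq F]
    (h3 : ¬ IsSquare (-1 : F)) {x : F} (hx : x ≠ 0) :
    IsSquare (-x) ↔ ¬ IsSquare x := by
  have hq : quadraticChar F (-1) = -1 := quadraticChar_neg_one_iff_not_isSquare.mpr h3
  rw [← quadraticChar_one_iff_isSquare (neg_ne_zero.mpr hx),
    show (-x : F) = (-1) * x from by ring, map_mul, hq,
    ← quadraticChar_neg_one_iff_not_isSquare]
  omega

theorem stmt_17 (n : ℕ) {F : Type*} [Field F] [Fintype F]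
    (hF : Fintype.card F = 3 ^ (2 * n + 1)) :
    {δ : F | ∃ κ : Fˣ, (κ : F) ^ (3 ^ (n + 1) + 1) * 1 = δ}
        = {x : F | x ≠ 0 ∧ IsSquare x} ∧
      {δ : F | ∃ κ : Fˣ, (κ : F) ^ (3 ^ (n + 1) + 1) * (-1) = δ}
        = {x : F | ¬ IsSquare x} ∧
      Nat.card {δ : F | ∃ κ : Fˣ, (κ : F) ^ (3 ^ (n + 1) + 1) * 1 = δ}
        = (3 ^ (2 * n + 1) - 1) / 2 ∧
      Nat.card {δ : F | ∃ κ : Fˣ, (κ : F) ^ (3 ^ (n + 1) + 1) * (-1) = δ}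
        = (3 ^ (2 * n + 1) - 1) / 2 := by
  classical
  -- basic numerology
  have h2 : 1 ≤ (3:ℕ) ^ (n + 1) := Nat.one_le_pow _ _ (by norm_num)
  have h3q : 1 ≤ (3:ℕ) ^ (2 * n + 1) := Nat.one_le_pow _ _ (by norm_num)
  have h1 : (3:ℕ) ^ (n + 1) * 3 ^ (n + 1) = 3 * 3 ^ (2 * n + 1) := by
    rw [← pow_add, show (n + 1) + (n + 1) = (2 * n + 1) + 1 from by omega, pow_succ]
    ring
  have hexp : (3 ^ (n + 1) - 1) * (3 ^ (n + 1) + 1)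
      = 3 * (3 ^ (2 * n + 1) - 1) + 2 := by
    obtain ⟨k, hk⟩ := Nat.exists_eq_add_of_le h2
    rw [hk] at h1 ⊢
    rw [show 1 + k - 1 = k from by omega]
    have key : k * (1 + k + 1) + 1 = (1 + k) * (1 + k) := by ring
    set A := k * (1 + k + 1) with hA
    set B := (1 + k) * (1 + k) with hB
    omega
  -- -1 is not a square
  have hm1 : ¬ IsSquare (-1 : F) := by
    rw [FiniteField.isSquare_neg_one_iff, hF, pow3_mod4]
    simp
  -- the odd exponent
  have hodd : Odd ((3:ℕ) ^ (n + 1)) := Odd.pow (⟨1, by norm_num⟩ : Odd 3)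
  obtain ⟨k, hk⟩ := hodd
  -- first set equality
  have hS : {δ : F | ∃ κ : Fˣ, (κ : F) ^ (3 ^ (n + 1) + 1) * 1 = δ}
      = {x : F | x ≠ 0 ∧ IsSquare x} := by
    ext x
    simp only [Set.mem_setOf_eq, mul_one]
    constructor
    · rintro ⟨κ, rfl⟩
      refine ⟨pow_ne_zero _ κ.ne_zero, ?_⟩
      refine ⟨(κ : F) ^ (k + 1), ?_⟩
      rw [← pow_add, show (k + 1) + (k + 1) = 3 ^ (n + 1) + 1 from by omega]
    · rintro ⟨hx0, y, rfl⟩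
      have hy : y ≠ 0 := by
        intro h; exact hx0 (by rw [h, mul_zero])
      refine ⟨(Units.mk0 y hy) ^ (3 ^ (n + 1) - 1), ?_⟩
      simp only [Units.val_pow_eq_pow_val, Units.val_mk0]
      rw [← pow_mul, hexp, pow_add, pow_mul', ← hF,
        FiniteField.pow_card_sub_one_eq_one y hy]
      ring
  -- second set equality
  have hT : {δ : F | ∃ κ : Fˣ, (κ : F) ^ (3 ^ (n + 1) + 1) * (-1) = δ}
      = {x : F | ¬ IsSquare x} := by
    ext x
    simp only [Set.mem_setOf_eq]
    constructor
    · rintro ⟨κ, rfl⟩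
      have hmem : (κ : F) ^ (3 ^ (n + 1) + 1) ∈ {x : F | x ≠ 0 ∧ IsSquare x} := by
        rw [← hS]; exact ⟨κ, mul_one _⟩
      obtain ⟨hs0, hsq⟩ := hmem
      rw [mul_neg_one]
      intro h
      exact (isSquare_neg_iff hm1 hs0).mp h hsq
    · intro hx
      have hx0 : x ≠ 0 := by
        intro h; exact hx ⟨0, by rw [h, mul_zero]⟩
      have hmem : -x ∈ {x : F | x ≠ 0 ∧ IsSquare x} :=
        ⟨neg_ne_zero.mpr hx0, (isSquare_neg_iff hm1 hx0).mpr hx⟩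
      rw [← hS] at hmem
      obtain ⟨κ, hκ⟩ := hmem
      exact ⟨κ, by linear_combination (-1 : F) * hκ⟩
  refine ⟨hS, hT, ?_⟩
  -- cardinalities
  rw [hS, hT, Nat.card_coe_set_eq, Nat.card_coe_set_eq]
  set A : Set F := {x : F | x ≠ 0 ∧ IsSquare x} with hA
  set B : Set F := {x : F | ¬ IsSquare x} with hB
  have hAB : B = (fun y : F => -y) '' A := by
    ext x
    simp only [Set.mem_image, Set.mem_setOf_eq, hA, hB]
    constructor
    · intro hx
      have hx0 : x ≠ 0 := by
        intro h; exact hx ⟨0, by rw [h, mul_zero]⟩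
      exact ⟨-x, ⟨neg_ne_zero.mpr hx0, (isSquare_neg_iff hm1 hx0).mpr hx⟩, neg_neg x⟩
    · rintro ⟨y, ⟨hy0, hysq⟩, rfl⟩
      intro h
      exact (isSquare_neg_iff hm1 hy0).mp h hysq
  have hcardeq : A.ncard = B.ncard := by
    rw [hAB, Set.ncard_image_of_injective _ neg_injective]
  have hdisj : Disjoint A B := by
    rw [Set.disjoint_left]
    rintro x ⟨_, hsq⟩ hns
    exact hns hsq
  have hunion : A ∪ B = ({0} : Set F)ᶜ := by
    ext x
    simp only [Set.mem_union, Set.mem_compl_iff, Set.mem_singleton_iff, Set.mem_setOf_eq, hA, hB]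
    constructor
    · rintro (⟨hx0, _⟩ | hns)
      · exact hx0
      · intro h; exact hns ⟨0, by rw [h, mul_zero]⟩
    · intro hx0
      by_cases h : IsSquare x
      · exact Or.inl ⟨hx0, h⟩
      · exact Or.inr h
  have hcompl : (({0} : Set F)ᶜ).ncard = 3 ^ (2 * n + 1) - 1 := by
    have := Set.ncard_add_ncard_compl ({0} : Set F)
    rw [Set.ncard_singleton, Nat.card_eq_fintype_card, hF] at this
    omega
  have hsum : A.ncard + B.ncard = 3 ^ (2 * n + 1) - 1 := by
    rw [← Set.ncard_union_eq hdisj (Set.toFinite A) (Set.toFinite B), hunion, hcompl]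
  constructor <;> omega
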